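/- Space KAM and Space LAM are weakly bisimilar on Λdet: let R relate a Space KAM state (t,e,S) to the Space LAM state (ε,t,e,S). For every closed term t0 ∈ Λdet, on states reachable from the respective initial states of t0, R is a weak bisimulation: every Space KAM transition from s is matched by a nonempty sequence of at most three Space LAM transitions from the R-related state ending in an R-related state, and conversely every Space LAM transition sequence reaching an empty-dump state from an R-related state is matched by at most one Space KAM transition. Consequently the two complete runs from t0 correspond, and their space consumption is the same up to a fixed constant overhead. -/

import Mathlib

set_option autoImplicit false

/-! λ-terms with variable names in ℕ. -/
inductive Term : Type
  | var : ℕ → Term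
  | lam : ℕ → Term → Term
  | app : Term → Term → Term
deriving DecidableEq

namespace Term

/-- Free variables. -/
def fv : Term → Finset ℕ
  | var x => {x}
  | lam x t => fv t \ {x}
  | app t u => fv t ∪ fv u

/-- A term is closed if it has no free variables. -/
def closed (t : Term) : Prop := t.fv = ∅

/-- Substitution of `u` for the free occurrences of `x`; it is capture-avoiding
whenever the substituted term `u` is closed, which is the only case arising in
Closed Call-by-Name. -/
def subst (x : ℕ) (u : Term) : Term → Term
  | var y => if y = x then u else var y
  | lam y t => if y = x then lam y t else lam y (subst x u t)
  | app t r => app (subst x u t) (subst x u r)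

/-- In-order (left-to-right) enumeration of the constructors (as subterm occurrences). -/
def inorder : Term → List Term
  | var x => [var x]
  | lam x t => lam x t :: inorder t
  | app t u => inorder t ++ app t u :: inorder u

/-- Membership in the deterministic λ-calculus `Λdet`: the right subterm of every
application is a variable or an abstraction. -/
def IsDet : Term → Prop
  | var _ => True
  | lam _ t => IsDet t
  | app t u => IsDet t ∧ IsDet u ∧ ((∃ x, u = var x) ∨ ∃ x r, u = lam x r)

end Term

/-- Weak head reduction: `(λx.t) u r1 … rh →wh t{x:=u} r1 … rh`. -/
inductive Whr : Term → Term → Prop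
  | beta (x : ℕ) (t u : Term) : Whr (Term.app (Term.lam x t) u) (Term.subst x u t)
  | appL {t t' : Term} (u : Term) : Whr t t' → Whr (Term.app t u) (Term.app t' u)

def WhNormal (t : Term) : Prop := ∀ u, ¬ Whr t u

/-- `NSteps R n a b`: exactly `n` `R`-steps from `a` to `b`. -/
inductive NSteps {α : Type _} (R : α → α → Prop) : ℕ → α → α → Prop
  | refl (a : α) : NSteps R 0 a a
  | head {a b c : α} {n : ℕ} : R a b → NSteps R n b c → NSteps R (n + 1) a c

/-! Closures and (local) environments. -/
mutual
  inductive Clo : Type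
    | mk : Term → Env → Clo
  inductive Env : Type
    | nil : Env
    | cons : ℕ → Clo → Env → Env
end

def Env.lookup : Env → ℕ → Option Clo
  | .nil, _ => none
  | .cons y c e, x => if y = x then some c else Env.lookup e x

def Env.dom : Env → Finset ℕ
  | .nil => ∅
  | .cons x _ e => insert x (Env.dom e)

/-- Restriction `e|s` of an environment to a set of variables. -/
def Env.restrict : Env → Finset ℕ → Env
  | .nil, _ => .nil
  | .cons x c e, s => if x ∈ s then .cons x c (Env.restrict e s) else Env.restrict e s

mutual
  /-- Decoding of a closure into a λ-term. -/
  def Clo.decode : Clo → Term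
    | .mk t e => Env.decode t e
  /-- Decoding: `(t, ε)↓ = t`, `(t, [x←c]·e)↓ = (t{x:=c↓}, e)↓`. -/
  def Env.decode : Term → Env → Term
    | t, .nil => t
    | t, .cons x c e => Env.decode (Term.subst x (Clo.decode c) t) e
end

mutual
  /-- Hereditary number of closures in a closure (without sharing). -/
  def Clo.count : Clo → ℕ
    | .mk _ e => 1 + Env.count e
  def Env.count : Env → ℕ
    | .nil => 0
    | .cons _ c e => Clo.count c + Env.count e
end

mutual
  /-- A closure `(t,e)` is closed: `fv t ⊆ dom e` and hereditarily so. -/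
  def Clo.Closed : Clo → Prop
    | .mk t e => t.fv ⊆ e.dom ∧ Env.ClosedE e
  def Env.ClosedE : Env → Prop
    | .nil => True
    | .cons _ c e => Clo.Closed c ∧ Env.ClosedE e
end

mutual
  /-- Environment domain invariant: `dom e = fv t`, hereditarily. -/
  def Clo.DomInv : Clo → Prop
    | .mk t e => e.dom = t.fv ∧ Env.DomInvE e
  def Env.DomInvE : Env → Prop
    | .nil => True
    | .cons _ c e => Clo.DomInv c ∧ Env.DomInvE e
end

/-- Size of the left address of (the first occurrence of) `u` in the code `t0`:
the binary length of its index in the in-order enumeration of the constructors of `t0`. -/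
def addrSize (t0 u : Term) : ℕ := Nat.size (t0.inorder.idxOf u)

mutual
  /-- Size of a closure, relative to the initial code `t0`. -/
  def Clo.size : Term → Clo → ℕ
    | t0, .mk u e => addrSize t0 u + Env.sizeE t0 e
  /-- Size of an environment, relative to the initial code `t0`. -/
  def Env.sizeE : Term → Env → ℕ
    | _, .nil => 0
    | t0, .cons x c e => addrSize t0 (Term.var x) + Clo.size t0 c + Env.sizeE t0 e
end

def stackSize (t0 : Term) (S : List Clo) : ℕ := (S.map (Clo.size t0)).sum

/-- States of the (Naive/Space) KAM. -/
structure State where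
  tm : Term
  env : Env
  stk : List Clo

/-- Size of a state, relative to the initial code `t0`. -/
def State.size (t0 : Term) (s : State) : ℕ :=
  addrSize t0 s.tm + Env.sizeE t0 s.env + stackSize t0 s.stk

/-- Closure count of a state: total number of closures occurring in it,
hereditarily and without sharing (the active term/environment pair is a closure). -/
def State.count (s : State) : ℕ :=
  1 + Env.count s.env + (s.stk.map Clo.count).sum

def State.decode (s : State) : Term :=
  s.stk.foldl (fun a c => Term.app a c.decode) (Env.decode s.tm s.env)

def initState (t : Term) : State := ⟨t, .nil, []⟩

/-! The Naive KAM. -/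
inductive NK : State → State → Prop
  | sea (t u : Term) (e : Env) (S : List Clo) :
      NK ⟨.app t u, e, S⟩ ⟨t, e, .mk u e :: S⟩
  | beta (x : ℕ) (t : Term) (e : Env) (c : Clo) (S : List Clo) :
      NK ⟨.lam x t, e, c :: S⟩ ⟨t, .cons x c e, S⟩
  | sub {x : ℕ} {e : Env} {u : Term} {e' : Env} (S : List Clo) :
      Env.lookup e x = some (.mk u e') → NK ⟨.var x, e, S⟩ ⟨u, e', S⟩

def NKFinal (s : State) : Prop := ∀ s', ¬ NK s s'

/-- Naive KAM runs counting the number of β-transitions. -/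
inductive NKRun : ℕ → State → State → Prop
  | refl (s : State) : NKRun 0 s s
  | sea {t u : Term} {e : Env} {S : List Clo} {s' : State} {n : ℕ} :
      NKRun n ⟨t, e, .mk u e :: S⟩ s' → NKRun n ⟨.app t u, e, S⟩ s'
  | beta {x : ℕ} {t : Term} {e : Env} {c : Clo} {S : List Clo} {s' : State} {n : ℕ} :
      NKRun n ⟨t, .cons x c e, S⟩ s' → NKRun (n + 1) ⟨.lam x t, e, c :: S⟩ s'
  | sub {x : ℕ} {e : Env} {u : Term} {e' : Env} {S : List Clo} {s' : State} {n : ℕ} :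
      Env.lookup e x = some (.mk u e') → NKRun n ⟨u, e', S⟩ s' → NKRun n ⟨.var x, e, S⟩ s'

/-! The Space KAM. -/
inductive SK : State → State → Prop
  | seav {t : Term} {x : ℕ} {e : Env} {c : Clo} (S : List Clo) :
      Env.lookup e x = some c →
      SK ⟨.app t (.var x), e, S⟩ ⟨t, e.restrict t.fv, c :: S⟩
  | seanv {t u : Term} {e : Env} (S : List Clo) :
      (∀ x, u ≠ .var x) →
      SK ⟨.app t u, e, S⟩ ⟨t, e.restrict t.fv, .mk u (e.restrict u.fv) :: S⟩
  | betaw {x : ℕ} {t : Term} {e : Env} (c : Clo) (S : List Clo) :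
      x ∉ t.fv → SK ⟨.lam x t, e, c :: S⟩ ⟨t, e, S⟩
  | betanw {x : ℕ} {t : Term} {e : Env} (c : Clo) (S : List Clo) :
      x ∈ t.fv → SK ⟨.lam x t, e, c :: S⟩ ⟨t, .cons x c e, S⟩
  | sub {x : ℕ} {e : Env} {u : Term} {e' : Env} (S : List Clo) :
      Env.lookup e x = some (.mk u e') → SK ⟨.var x, e, S⟩ ⟨u, e', S⟩

def SKFinal (s : State) : Prop := ∀ s', ¬ SK s s'

/-- Space KAM runs counting the number of β-transitions (`→βw` and `→β¬w`). -/
inductive SKRun : ℕ → State → State → Prop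
  | refl (s : State) : SKRun 0 s s
  | seav {t : Term} {x : ℕ} {e : Env} {c : Clo} {S : List Clo} {s' : State} {n : ℕ} :
      Env.lookup e x = some c →
      SKRun n ⟨t, e.restrict t.fv, c :: S⟩ s' → SKRun n ⟨.app t (.var x), e, S⟩ s'
  | seanv {t u : Term} {e : Env} {S : List Clo} {s' : State} {n : ℕ} :
      (∀ x, u ≠ .var x) →
      SKRun n ⟨t, e.restrict t.fv, .mk u (e.restrict u.fv) :: S⟩ s' →
      SKRun n ⟨.app t u, e, S⟩ s'
  | betaw {x : ℕ} {t : Term} {e : Env} {c : Clo} {S : List Clo} {s' : State} {n : ℕ} :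
      x ∉ t.fv → SKRun n ⟨t, e, S⟩ s' → SKRun (n + 1) ⟨.lam x t, e, c :: S⟩ s'
  | betanw {x : ℕ} {t : Term} {e : Env} {c : Clo} {S : List Clo} {s' : State} {n : ℕ} :
      x ∈ t.fv → SKRun n ⟨t, .cons x c e, S⟩ s' → SKRun (n + 1) ⟨.lam x t, e, c :: S⟩ s'
  | sub {x : ℕ} {e : Env} {u : Term} {e' : Env} {S : List Clo} {s' : State} {n : ℕ} :
      Env.lookup e x = some (.mk u e') → SKRun n ⟨u, e', S⟩ s' → SKRun n ⟨.var x, e, S⟩ s'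

/-! Concrete combinators. -/

/-- I := λx.x -/
def tmI : Term := .lam 0 (.var 0)
/-- θ := λx.λy.y (x x y)  (variables: x := 0, y := 1) -/
def tmTheta : Term := .lam 0 (.lam 1 (.app (.var 1) (.app (.app (.var 0) (.var 0)) (.var 1))))
/-- fix := θ θ -/
def tmFix : Term := .app tmTheta tmTheta
/-- x x y -/
def xxy : Term := .app (.app (.var 0) (.var 0)) (.var 1)
/-- toyaux := λf.λz. z f f I  (f := 3, z := 2) -/
def tmToyaux : Term := .lam 3 (.lam 2 (.app (.app (.app (.var 2) (.var 3)) (.var 3)) tmI))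
/-- toy := fix toyaux -/
def tmToy : Term := .app tmFix tmToyaux

/-- Scott encoding of binary strings (false = 0, true = 1; x0 := 4, x1 := 5, xε := 6):
`⟨ε⟩ := λx0.λx1.λxε.xε`, `⟨b·r⟩ := λx0.λx1.λxε.xb ⟨r⟩`. -/
def encStr : List Bool → Term
  | [] => .lam 4 (.lam 5 (.lam 6 (.var 6)))
  | b :: r => .lam 4 (.lam 5 (.lam 6 (.app (.var (if b then 5 else 4)) (encStr r))))

/-- A variable fresh for `t`. -/
def freshVar (t : Term) : ℕ := t.fv.sup id + 1

/-- η-expansion: `η(t) := λx. t x` with `x ∉ fv t`. -/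
def Term.eta (t : Term) : Term := .lam (freshVar t) (.app t (.var (freshVar t)))

/-- n-fold η-expansion. -/
def etaN (n : ℕ) (t : Term) : Term := Term.eta^[n] t

/-! Environment families for the Naive KAM scrolling invariant
(variables: x := 0, y := 1, z := 2, f := 3, x0 := 4, x1 := 5, xε := 6). -/

/-- `e0 := [x←(θ,ε)]·[y←(toyaux,ε)]`, `e(i+1) := [x←(x,ei)]·[y←(y,ei)]`. -/
def eE : ℕ → Env
  | 0 => .cons 0 (.mk tmTheta .nil) (.cons 1 (.mk tmToyaux .nil) .nil)
  | i + 1 => .cons 0 (.mk (.var 0) (eE i)) (.cons 1 (.mk (.var 1) (eE i)) .nil)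

/-- `e″0 := ε`, `e″(i+1) := [xε←(I,e′i)]·[x1←(f,e′i)]·[x0←(f,e′i)]·e″i`
(with `e′i` inlined). -/
def eDD (s : List Bool) : ℕ → Env
  | 0 => .nil
  | i + 1 =>
    let ep : Env := .cons 2 (.mk (encStr (s.drop i)) (eDD s i)) (.cons 3 (.mk xxy (eE i)) .nil)
    .cons 6 (.mk tmI ep) (.cons 5 (.mk (.var 3) ep) (.cons 4 (.mk (.var 3) ep) (eDD s i)))

/-- `e′i := [z←(⟨b(i+1)⋯bn⟩, e″i)]·[f←(x x y, ei)]`. -/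
def eP (s : List Bool) (i : ℕ) : Env :=
  .cons 2 (.mk (encStr (s.drop i)) (eDD s i)) (.cons 3 (.mk xxy (eE i)) .nil)

/-! The family `tn` for the abstract-time overhead explosion
(variables `xi := i`). -/

/-- `x0 x1 ⋯ xn`. -/
def varsApp : ℕ → Term
  | 0 => .var 0
  | n + 1 => .app (varsApp n) (.var (n + 1))

/-- Term component of `Sn`: `x0 x0` for `n = 0`, `x0 ⋯ xn` for `n ≥ 1`. -/
def sTerm : ℕ → Term
  | 0 => .app (.var 0) (.var 0)
  | n + 1 => varsApp (n + 1)

/-- `e0 := [x0←(I,ε)]`, `e(n+1) := [x(n+1)←Sn]·en`. -/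
def eN : ℕ → Env
  | 0 => .cons 0 (.mk tmI .nil) .nil
  | n + 1 => .cons (n + 1) (.mk (sTerm n) (eN n)) (eN n)

/-- `Sn := (sTerm n, en)`. -/
def sClo (n : ℕ) : Clo := .mk (sTerm n) (eN n)

/-- `Ci⟨t⟩ := λxi. t (x0 ⋯ xi)` (with `C0⟨t⟩ = λx0. t (x0 x0)`). -/
def cPlug (i : ℕ) (t : Term) : Term := .lam i (.app t (sTerm i))

/-- `C0⟨C1⟨⋯Cn⟨t⟩⋯⟩⟩`. -/
def nest (n : ℕ) (t : Term) : Term := (List.range (n + 1)).foldr cPlug t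

/-- `tn := C0⟨C1⟨⋯Cn⟨λy.I⟩⋯⟩⟩ I`. -/
def tN (n : ℕ) : Term := .app (nest n (.lam 1 tmI)) tmI

/-! Global-copy scrolling terms (s′ := 7, z := 2, x := 0, f := 3). -/

/-- `λf.λs′. s′ f f z` (free variable z). -/
def tScroll : Term :=
  .lam 3 (.lam 7 (.app (.app (.app (.var 7) (.var 3)) (.var 3)) (.var 2)))

/-- `glCpy := λx.( fix (λf.λs′. s′ f f x) ) x`. -/
def glCpy : Term :=
  .lam 0 (.app (.app tmFix
    (.lam 3 (.lam 7 (.app (.app (.app (.var 7) (.var 3)) (.var 3)) (.var 0)))))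
    (.var 0))

/-! The Space LAM. -/

structure LState where
  dump : List (Clo × List Clo)
  tm : Term
  env : Env
  stk : List Clo

inductive LAM : LState → LState → Prop
  | sea {D : List (Clo × List Clo)} {t u : Term} {e : Env} {S : List Clo} :
      LAM ⟨D, .app t u, e, S⟩ ⟨(.mk t (e.restrict t.fv), S) :: D, u, e.restrict u.fv, []⟩
  | ret {D : List (Clo × List Clo)} {u : Term} {e' : Env} {S : List Clo}
      {x : ℕ} {t : Term} {e : Env} :
      LAM ⟨(.mk u e', S) :: D, .lam x t, e, []⟩ ⟨D, u, e', .mk (.lam x t) e :: S⟩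
  | betaw {D : List (Clo × List Clo)} {x : ℕ} {t : Term} {e : Env} {c : Clo} {S : List Clo} :
      x ∉ t.fv → LAM ⟨D, .lam x t, e, c :: S⟩ ⟨D, t, e, S⟩
  | betanw {D : List (Clo × List Clo)} {x : ℕ} {t : Term} {e : Env} {c : Clo} {S : List Clo} :
      x ∈ t.fv → LAM ⟨D, .lam x t, e, c :: S⟩ ⟨D, t, .cons x c e, S⟩
  | sub {D : List (Clo × List Clo)} {x : ℕ} {e : Env} {u : Term} {e' : Env} {S : List Clo} :
      Env.lookup e x = some (.mk u e') → LAM ⟨D, .var x, e, S⟩ ⟨D, u, e', S⟩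

def LFinal (ls : LState) : Prop := ∀ ls', ¬ LAM ls ls'

/-- The Space KAM state `(t,e,S)` seen as the Space LAM state `(ε,t,e,S)`. -/
def embed (s : State) : LState := ⟨[], s.tm, s.env, s.stk⟩

def lInit (t : Term) : LState := ⟨[], t, .nil, []⟩

def LState.size (t0 : Term) (ls : LState) : ℕ :=
  (ls.dump.map (fun p => Clo.size t0 p.1 + stackSize t0 p.2)).sum +
    addrSize t0 ls.tm + Env.sizeE t0 ls.env + stackSize t0 ls.stk

/-- A LAM-sequence from `a` whose first state with empty dump after `a` is its target. -/
inductive LRunToEmpty : LState → LState → Prop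
  | single {a b : LState} : LAM a b → b.dump = [] → LRunToEmpty a b
  | cons {a b c : LState} : LAM a b → b.dump ≠ [] → LRunToEmpty b c → LRunToEmpty a c

/-! Log-sensitive Turing machines. -/

/-- Input-tape alphabet {0, 1, L, R}. -/
inductive ISym : Type | zero | one | lend | rend
deriving DecidableEq

/-- Work-tape alphabet {0, 1, □}. -/
inductive WSym : Type | zero | one | blank
deriving DecidableEq

/-- Head moves. -/
inductive Move : Type | L | R | N
deriving DecidableEq

/-- A log-sensitive Turing machine: states `Fin n`, initial state, final states
`qtrue = s1` and `qfalse = s0`, and a deterministic transition function reading the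
current state and the two scanned symbols, writing on the work tape, moving both
heads, and changing state (`none` = halt). -/
structure TM where
  n : ℕ
  start : Fin n
  qtrue : Fin n
  qfalse : Fin n
  δ : Fin n → ISym → WSym → Option (Fin n × WSym × Move × Move)

/-- A configuration: state, input-head position (on the tape `L i R`), and the
work tape split as (left part, reversed) / scanned symbol / (right part). -/
structure Config (M : TM) where
  q : Fin M.n
  ipos : ℕ
  wl : List WSym
  wcur : WSym
  wr : List WSym

/-- The symbol of the input tape `L i R` at a given position. -/
def inputAt (i : List Bool) (p : ℕ) : ISym :=
  if p = 0 then .lend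
  else if h : p - 1 < i.length then (if i.get ⟨p - 1, h⟩ then .one else .zero)
  else .rend

def moveIpos (p : ℕ) : Move → ℕ
  | .L => p - 1
  | .R => p + 1
  | .N => p

def moveWork (wl : List WSym) (c : WSym) (wr : List WSym) : Move → List WSym × WSym × List WSym
  | .L => match wl with
    | [] => ([], .blank, c :: wr)
    | a :: l => (l, a, c :: wr)
  | .R => match wr with
    | [] => (c :: wl, .blank, [])
    | a :: r => (c :: wl, a, r)
  | .N => (wl, c, wr)

/-- One transition of the TM `M` on input `i`. -/
def TMStep (M : TM) (i : List Bool) (c c' : Config M) : Prop :=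
  ∃ q' w mi mw, M.δ c.q (inputAt i c.ipos) c.wcur = some (q', w, mi, mw) ∧
    c'.q = q' ∧ c'.ipos = moveIpos c.ipos mi ∧
    (c'.wl, c'.wcur, c'.wr) = moveWork c.wl w c.wr mw

def initConfig (M : TM) : Config M := ⟨M.start, 0, [], .blank, []⟩

/-- Number of work-tape cells used by a configuration. -/
def Config.workSize {M : TM} (c : Config M) : ℕ := c.wl.length + 1 + c.wr.length

def TMFinal (M : TM) (i : List Bool) (c : Config M) : Prop := ∀ c', ¬ TMStep M i c c'

/-- `⟨1⟩ := λx.λy.x` and `⟨0⟩ := λx.λy.y`. -/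
def encBool (b : Bool) : Term :=
  if b then .lam 0 (.lam 1 (.var 0)) else .lam 0 (.lam 1 (.var 1))

/-! ### Auxiliary lemmas for the weak bisimulation -/

section BisimAux

/-! #### inorder lemmas -/

lemma self_mem_inorder (t : Term) : t ∈ t.inorder := by
  cases t <;> simp [Term.inorder]

lemma mem_inorder_trans : ∀ {t a b : Term}, a ∈ t.inorder → b ∈ a.inorder → b ∈ t.inorder := by
  intro t
  induction t with
  | var x =>
    intro a b ha hb
    simp [Term.inorder] at ha
    subst ha; exact hb
  | lam x r ih =>
    intro a b ha hb
    simp [Term.inorder] at ha ⊢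
    rcases ha with rfl | ha
    · simpa [Term.inorder] using hb
    · exact Or.inr (ih ha hb)
  | app p q ihp ihq =>
    intro a b ha hb
    simp [Term.inorder] at ha ⊢
    rcases ha with ha | rfl | ha
    · exact Or.inl (ihp ha hb)
    · simpa [Term.inorder] using hb
    · exact Or.inr (Or.inr (ihq ha hb))

lemma app_left_mem {t0 t u : Term} (h : Term.app t u ∈ t0.inorder) : t ∈ t0.inorder :=
  mem_inorder_trans h (by simp [Term.inorder, self_mem_inorder])

lemma app_right_mem {t0 t u : Term} (h : Term.app t u ∈ t0.inorder) : u ∈ t0.inorder :=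
  mem_inorder_trans h (by simp [Term.inorder, self_mem_inorder])

lemma lam_body_mem {t0 : Term} {x : ℕ} {t : Term} (h : Term.lam x t ∈ t0.inorder) :
    t ∈ t0.inorder :=
  mem_inorder_trans h (by simp [Term.inorder, self_mem_inorder])

/-! #### indexOf lemmas -/

lemma indexOf_cons_le (a b : Term) (l : List Term) :
    List.idxOf a (b :: l) ≤ List.idxOf a l + 1 := by
  by_cases h : b = a
  · rw [List.idxOf_cons_eq _ h]; exact Nat.zero_le _
  · rw [List.idxOf_cons_ne _ h]

lemma indexOf_append_le (a : Term) (l1 l2 : List Term) :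
    List.idxOf a (l1 ++ l2) ≤ l1.length + List.idxOf a l2 := by
  by_cases h : a ∈ l1
  · rw [List.idxOf_append_of_mem h]
    exact le_trans (le_of_lt (List.idxOf_lt_length_iff.2 h)) (Nat.le_add_right _ _)
  · rw [List.idxOf_append_of_notMem h]

lemma indexOf_app_left :
    ∀ {s t u : Term}, Term.app t u ∈ s.inorder →
      s.inorder.idxOf t ≤ s.inorder.idxOf (Term.app t u) := by
  intro s
  induction s with
  | var v => intro t u h; simp [Term.inorder] at h
  | lam x r ih =>
    intro t u h
    have h' : Term.app t u ∈ r.inorder := by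
      simp [Term.inorder] at h; exact h
    show List.idxOf t (Term.lam x r :: r.inorder) ≤
      List.idxOf (Term.app t u) (Term.lam x r :: r.inorder)
    rw [List.idxOf_cons_ne _ (by simp : Term.lam x r ≠ Term.app t u)]
    by_cases ht : Term.lam x r = t
    · rw [List.idxOf_cons_eq _ ht]; exact Nat.zero_le _
    · rw [List.idxOf_cons_ne _ ht]; exact Nat.succ_le_succ (ih h')
  | app p q ihp ihq =>
    intro t u h
    have hl : (Term.app p q).inorder = p.inorder ++ (Term.app p q :: q.inorder) := rfl
    by_cases hm : Term.app t u ∈ p.inorder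
    · have htm : t ∈ p.inorder := app_left_mem hm
      rw [hl, List.idxOf_append_of_mem hm, List.idxOf_append_of_mem htm]
      exact ihp hm
    · rw [hl, List.idxOf_append_of_notMem hm]
      by_cases heq : Term.app p q = Term.app t u
      · rw [List.idxOf_cons_eq _ heq]
        have htp : t = p := by injection heq with h1 h2; exact h1.symm
        subst htp
        rw [List.idxOf_append_of_mem (self_mem_inorder t)]
        have := List.idxOf_lt_length_iff.2 (self_mem_inorder t)
        omega
      · have hmq : Term.app t u ∈ q.inorder := by
          rw [hl] at h
          simp at h
          rcases h with h | h | h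
          · exact absurd h hm
          · exact absurd (by rw [← h.1, ← h.2]) heq
          · exact h
        rw [List.idxOf_cons_ne _ heq]
        have h1 := indexOf_append_le t p.inorder (Term.app p q :: q.inorder)
        have h2 := indexOf_cons_le t (Term.app p q) q.inorder
        have h3 := ihq hmq
        omega

lemma indexOf_app_right :
    ∀ {s t u : Term}, Term.app t u ∈ s.inorder →
      ((∃ x, u = Term.var x) ∨ ∃ y r, u = Term.lam y r) →
      s.inorder.idxOf u ≤ s.inorder.idxOf (Term.app t u) + 1 := by
  intro s
  have hne : ∀ (u p q : Term), ((∃ x, u = Term.var x) ∨ ∃ y r, u = Term.lam y r) →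
      Term.app p q ≠ u := by
    rintro u p q (⟨x, rfl⟩ | ⟨y, r, rfl⟩) h <;> exact Term.noConfusion h
  have hhead : ∀ (u : Term), ((∃ x, u = Term.var x) ∨ ∃ y r, u = Term.lam y r) →
      u.inorder.idxOf u = 0 := by
    rintro u (⟨x, rfl⟩ | ⟨y, r, rfl⟩) <;>
      simp [Term.inorder, List.idxOf_cons_self]
  induction s with
  | var v => intro t u h _; simp [Term.inorder] at h
  | lam x r ih =>
    intro t u h hu
    have h' : Term.app t u ∈ r.inorder := by
      simp [Term.inorder] at h; exact h
    show List.idxOf u (Term.lam x r :: r.inorder) ≤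
      List.idxOf (Term.app t u) (Term.lam x r :: r.inorder) + 1
    rw [List.idxOf_cons_ne _ (by simp : Term.lam x r ≠ Term.app t u)]
    by_cases ht : Term.lam x r = u
    · rw [List.idxOf_cons_eq _ ht]; exact Nat.zero_le _
    · rw [List.idxOf_cons_ne _ ht]
      exact Nat.succ_le_succ (ih h' hu)
  | app p q ihp ihq =>
    intro t u h hu
    have hl : (Term.app p q).inorder = p.inorder ++ (Term.app p q :: q.inorder) := rfl
    by_cases hm : Term.app t u ∈ p.inorder
    · have hum : u ∈ p.inorder := app_right_mem hm
      rw [hl, List.idxOf_append_of_mem hm, List.idxOf_append_of_mem hum]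
      exact ihp hm hu
    · rw [hl, List.idxOf_append_of_notMem hm]
      by_cases heq : Term.app p q = Term.app t u
      · rw [List.idxOf_cons_eq _ heq]
        have huq : u = q := by injection heq with h1 h2; exact h2.symm
        subst huq
        have h1 := indexOf_append_le u p.inorder (Term.app p u :: u.inorder)
        rw [List.idxOf_cons_ne _ (hne u p u hu), hhead u hu] at h1
        omega
      · have hmq : Term.app t u ∈ q.inorder := by
          rw [hl] at h
          simp at h
          rcases h with h | h | h
          · exact absurd h hm
          · exact absurd (by rw [← h.1, ← h.2]) heq
          · exact h
        rw [List.idxOf_cons_ne _ heq]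
        have h1 := indexOf_append_le u p.inorder (Term.app p q :: q.inorder)
        have h2 := indexOf_cons_le u (Term.app p q) q.inorder
        have h3 := ihq hmq hu
        omega

/-! #### Nat.size / addrSize lemmas -/

lemma nat_size_succ_le (n : ℕ) : Nat.size (n + 1) ≤ Nat.size n + 1 := by
  apply Nat.size_le.2
  have h1 : n < 2 ^ Nat.size n := Nat.lt_size_self n
  have h2 : 2 ^ Nat.size n < 2 ^ (Nat.size n + 1) :=
    Nat.pow_lt_pow_succ (by norm_num)
  omega

lemma addr_left_le {t0 t u : Term} (h : Term.app t u ∈ t0.inorder) :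
    addrSize t0 t ≤ addrSize t0 (Term.app t u) :=
  Nat.size_le_size (indexOf_app_left h)

lemma addr_right_le {t0 t u : Term} (h : Term.app t u ∈ t0.inorder)
    (hu : (∃ x, u = Term.var x) ∨ ∃ y r, u = Term.lam y r) :
    addrSize t0 u ≤ addrSize t0 (Term.app t u) + 1 :=
  le_trans (Nat.size_le_size (indexOf_app_right h hu)) (nat_size_succ_le _)

/-! #### Environment lemmas -/

lemma lookup_restrict : ∀ {e : Env} {s : Finset ℕ} {x : ℕ}, x ∈ s →
    (e.restrict s).lookup x = e.lookup x
  | .nil, _, _, _ => rfl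
  | .cons y c e, s, x, hx => by
    show (if y ∈ s then Env.cons y c (e.restrict s) else e.restrict s).lookup x
      = (if y = x then some c else e.lookup x)
    by_cases hy : y ∈ s
    · rw [if_pos hy]
      show (if y = x then some c else (e.restrict s).lookup x) = _
      by_cases hyx : y = x
      · rw [if_pos hyx, if_pos hyx]
      · rw [if_neg hyx, if_neg hyx]
        exact lookup_restrict hx
    · rw [if_neg hy, if_neg (fun (h : y = x) => hy (h ▸ hx))]
      exact lookup_restrict hx

lemma dom_restrict : ∀ (e : Env) (s : Finset ℕ), (e.restrict s).dom = e.dom ∩ s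
  | .nil, s => by simp [Env.restrict, Env.dom]
  | .cons y c e, s => by
    show (if y ∈ s then Env.cons y c (e.restrict s) else e.restrict s).dom
      = insert y e.dom ∩ s
    by_cases hy : y ∈ s
    · rw [if_pos hy]
      show insert y (e.restrict s).dom = _
      rw [dom_restrict e s, Finset.insert_inter_of_mem hy]
    · rw [if_neg hy, dom_restrict e s, Finset.insert_inter_of_notMem hy]

lemma sizeE_restrict_le : ∀ (t0 : Term) (e : Env) (s : Finset ℕ),
    Env.sizeE t0 (e.restrict s) ≤ Env.sizeE t0 e
  | _, .nil, _ => le_refl _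
  | t0, .cons y c e, s => by
    show Env.sizeE t0 (if y ∈ s then Env.cons y c (e.restrict s) else e.restrict s)
      ≤ addrSize t0 (Term.var y) + Clo.size t0 c + Env.sizeE t0 e
    have ih := sizeE_restrict_le t0 e s
    by_cases hy : y ∈ s
    · rw [if_pos hy]
      show addrSize t0 (Term.var y) + Clo.size t0 c + Env.sizeE t0 (e.restrict s) ≤ _
      omega
    · rw [if_neg hy]
      omega

lemma lookup_of_mem_dom : ∀ {e : Env} {x : ℕ}, x ∈ e.dom → ∃ c, e.lookup x = some c
  | .nil, x, h => by simp [Env.dom] at h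
  | .cons y c e, x, h => by
    show ∃ c', (if y = x then some c else e.lookup x) = some c'
    by_cases hyx : y = x
    · exact ⟨c, by rw [if_pos hyx]⟩
    · rw [if_neg hyx]
      apply lookup_of_mem_dom
      have : x ∈ insert y e.dom := h
      rcases Finset.mem_insert.1 this with h' | h'
      · exact absurd h'.symm hyx
      · exact h'

/-! #### The reachability invariant -/

mutual
  /-- Invariant for closures stored in environments/stacks: the term is an
  abstraction, deterministic, occurs in the initial code, and the closure is
  closed, hereditarily. -/
  def GoodClo (t0 : Term) : Clo → Prop
    | .mk t e => (∃ y r, t = .lam y r) ∧ t.IsDet ∧ t ∈ t0.inorder ∧ t.fv ⊆ e.dom ∧ GoodEnv t0 e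
  def GoodEnv (t0 : Term) : Env → Prop
    | .nil => True
    | .cons _ c e => GoodClo t0 c ∧ GoodEnv t0 e
end

def GoodState (t0 : Term) (s : State) : Prop :=
  s.tm.IsDet ∧ s.tm ∈ t0.inorder ∧ s.tm.fv ⊆ s.env.dom ∧ GoodEnv t0 s.env ∧
    ∀ c ∈ s.stk, GoodClo t0 c

lemma goodEnv_restrict : ∀ {t0 : Term} {e : Env} (s : Finset ℕ), GoodEnv t0 e →
    GoodEnv t0 (e.restrict s)
  | _, .nil, _, _ => trivial
  | t0, .cons y c e, s, h => by
    have h' : GoodClo t0 c ∧ GoodEnv t0 e := h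
    show GoodEnv t0 (if y ∈ s then Env.cons y c (e.restrict s) else e.restrict s)
    by_cases hy : y ∈ s
    · rw [if_pos hy]
      exact (⟨h'.1, goodEnv_restrict s h'.2⟩ :
        GoodClo t0 c ∧ GoodEnv t0 (e.restrict s))
    · rw [if_neg hy]
      exact goodEnv_restrict s h'.2

lemma goodEnv_lookup : ∀ {t0 : Term} {e : Env} {x : ℕ} {c : Clo},
    GoodEnv t0 e → e.lookup x = some c → GoodClo t0 c
  | _, .nil, _, _, _, h => absurd h (by simp [Env.lookup])
  | t0, .cons y c' e, x, c, hg, h => by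
    have hg' : GoodClo t0 c' ∧ GoodEnv t0 e := hg
    have h' : (if y = x then some c' else e.lookup x) = some c := h
    by_cases hyx : y = x
    · rw [if_pos hyx] at h'
      cases h'
      exact hg'.1
    · rw [if_neg hyx] at h'
      exact goodEnv_lookup hg'.2 h'

lemma goodState_step {t0 : Term} {s s' : State}
    (hg : GoodState t0 s) (h : SK s s') : GoodState t0 s' := by
  cases h with
  | @seav t x e c S hlook =>
    obtain ⟨hdet, hmem, hfv, henv, hstk⟩ := hg
    have hdet' : t.IsDet ∧ (Term.var x).IsDet ∧ _ := hdet
    have hfv' : t.fv ∪ (Term.var x).fv ⊆ e.dom := hfv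
    refine ⟨hdet'.1, app_left_mem hmem, ?_, goodEnv_restrict _ henv, ?_⟩
    · rw [dom_restrict]
      intro y hy
      exact Finset.mem_inter.2 ⟨hfv' (Finset.mem_union_left _ hy), hy⟩
    · intro c' hc'
      rcases List.mem_cons.1 hc' with rfl | hc'
      · exact goodEnv_lookup henv hlook
      · exact hstk _ hc'
  | @seanv t u e S hnv =>
    obtain ⟨hdet, hmem, hfv, henv, hstk⟩ := hg
    have hdet' : t.IsDet ∧ u.IsDet ∧ ((∃ x, u = .var x) ∨ ∃ y r, u = .lam y r) := hdet
    have hfv' : t.fv ∪ u.fv ⊆ e.dom := hfv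
    refine ⟨hdet'.1, app_left_mem hmem, ?_, goodEnv_restrict _ henv, ?_⟩
    · rw [dom_restrict]
      intro y hy
      exact Finset.mem_inter.2 ⟨hfv' (Finset.mem_union_left _ hy), hy⟩
    · intro c' hc'
      rcases List.mem_cons.1 hc' with rfl | hc'
      · refine ⟨?_, hdet'.2.1, app_right_mem hmem, ?_, goodEnv_restrict _ henv⟩
        · rcases hdet'.2.2 with ⟨x, rfl⟩ | hu
          · exact absurd rfl (hnv x)
          · exact hu
        · rw [dom_restrict]
          intro y hy
          exact Finset.mem_inter.2 ⟨hfv' (Finset.mem_union_right _ hy), hy⟩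
      · exact hstk _ hc'
  | @betaw x t e c S hx =>
    obtain ⟨hdet, hmem, hfv, henv, hstk⟩ := hg
    have hdet' : t.IsDet := hdet
    have hfv' : t.fv \ {x} ⊆ e.dom := hfv
    refine ⟨hdet', lam_body_mem hmem, ?_, henv, fun c' hc' => hstk _ (List.mem_cons_of_mem _ hc')⟩
    intro y hy
    refine hfv' (Finset.mem_sdiff.2 ⟨hy, ?_⟩)
    simp only [Finset.mem_singleton]
    rintro rfl
    exact hx hy
  | @betanw x t e c S hx =>
    obtain ⟨hdet, hmem, hfv, henv, hstk⟩ := hg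
    have hdet' : t.IsDet := hdet
    have hfv' : t.fv \ {x} ⊆ e.dom := hfv
    refine ⟨hdet', lam_body_mem hmem, ?_,
      (⟨hstk _ List.mem_cons_self, henv⟩ : GoodClo t0 c ∧ GoodEnv t0 e),
      fun c' hc' => hstk _ (List.mem_cons_of_mem _ hc')⟩
    intro y hy
    show y ∈ insert x e.dom
    by_cases hyx : y = x
    · exact hyx ▸ Finset.mem_insert_self _ _
    · exact Finset.mem_insert_of_mem (hfv' (Finset.mem_sdiff.2 ⟨hy, by simpa using hyx⟩))
  | @sub x e u e' S hlook =>
    obtain ⟨hdet, hmem, hfv, henv, hstk⟩ := hg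
    have hgc : GoodClo t0 (.mk u e') := goodEnv_lookup henv hlook
    obtain ⟨_, hdet', hmem', hfv', henv'⟩ := hgc
    exact ⟨hdet', hmem', hfv', henv', hstk⟩

lemma goodState_reach {t0 : Term} (hc : t0.closed) (hd : t0.IsDet) {s : State}
    (h : Relation.ReflTransGen SK (initState t0) s) : GoodState t0 s := by
  induction h with
  | refl =>
    refine ⟨hd, self_mem_inorder t0, ?_, trivial, ?_⟩
    · show t0.fv ⊆ Env.dom .nil
      have hc' : t0.fv = ∅ := hc
      rw [hc']
      exact Finset.empty_subset _
    · show ∀ c ∈ ([] : List Clo), GoodClo t0 c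
      simp
  | tail _ hbc ih => exact goodState_step ih hbc

/-! #### Simulation lemmas -/

lemma nsteps_rtg {α : Type _} {R : α → α → Prop} {n : ℕ} {a b : α}
    (h : NSteps R n a b) : Relation.ReflTransGen R a b := by
  induction h with
  | refl => exact .refl
  | head hab _ ih => exact .head hab ih

lemma sim_step {t0 : Term} {s s' : State} (hg : GoodState t0 s) (h : SK s s') :
    ∃ j : ℕ, 1 ≤ j ∧ j ≤ 3 ∧ NSteps LAM j (embed s) (embed s') := by
  cases h with
  | @seav t x e c S hlook =>
    have hgc : GoodClo t0 c := goodEnv_lookup hg.2.2.2.1 hlook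
    obtain ⟨u', eC⟩ := c
    obtain ⟨⟨y, r, rfl⟩, -, -, -, -⟩ := hgc
    refine ⟨3, by norm_num, by norm_num, ?_⟩
    have hlk : Env.lookup (e.restrict (Term.fv (.var x))) x = some (Clo.mk (.lam y r) eC) := by
      rw [lookup_restrict (show x ∈ Term.fv (Term.var x) by simp [Term.fv])]
      exact hlook
    exact NSteps.head LAM.sea (NSteps.head (LAM.sub hlk) (NSteps.head LAM.ret (NSteps.refl _)))
  | @seanv t u e S hnv =>
    have hdet : t.IsDet ∧ u.IsDet ∧ ((∃ x, u = .var x) ∨ ∃ y r, u = .lam y r) := hg.1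
    rcases hdet.2.2 with ⟨x, rfl⟩ | ⟨y, r, rfl⟩
    · exact absurd rfl (hnv x)
    · exact ⟨2, by norm_num, by norm_num,
        NSteps.head LAM.sea (NSteps.head LAM.ret (NSteps.refl _))⟩
  | @betaw x t e c S hx =>
    exact ⟨1, le_refl _, by norm_num, NSteps.head (LAM.betaw hx) (NSteps.refl _)⟩
  | @betanw x t e c S hx =>
    exact ⟨1, le_refl _, by norm_num, NSteps.head (LAM.betanw hx) (NSteps.refl _)⟩
  | @sub x e u e' S hlook =>
    exact ⟨1, le_refl _, by norm_num, NSteps.head (LAM.sub hlook) (NSteps.refl _)⟩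

lemma embed_reach {t0 : Term} (hc : t0.closed) (hd : t0.IsDet) {s : State}
    (h : Relation.ReflTransGen SK (initState t0) s) :
    Relation.ReflTransGen LAM (lInit t0) (embed s) := by
  induction h with
  | refl => exact .refl
  | tail hab hbc ih =>
    obtain ⟨j, -, -, hsteps⟩ := sim_step (goodState_reach hc hd hab) hbc
    exact ih.trans (nsteps_rtg hsteps)

lemma embed_size (t0 : Term) (s : State) : (embed s).size t0 = s.size t0 := by
  obtain ⟨t, e, S⟩ := s
  simp [embed, LState.size, State.size]

lemma size_emptyD (t0 t : Term) (e : Env) (S : List Clo) :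
    LState.size t0 ⟨[], t, e, S⟩ = State.size t0 ⟨t, e, S⟩ := by
  simp [LState.size, State.size]

lemma m2_size_eq (t0 t u' : Term) (e' eC : Env) (S : List Clo) :
    LState.size t0 ⟨[(.mk t e', S)], u', eC, []⟩ = State.size t0 ⟨t, e', .mk u' eC :: S⟩ := by
  simp [LState.size, State.size, stackSize, Clo.size]
  omega

lemma m1_size_bound {t0 t u : Term} {e : Env} {S : List Clo}
    (hmem : Term.app t u ∈ t0.inorder)
    (hu : (∃ x, u = Term.var x) ∨ ∃ y r, u = Term.lam y r) :
    LState.size t0 ⟨[(.mk t (e.restrict t.fv), S)], u, e.restrict u.fv, []⟩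
      ≤ 3 * (State.size t0 ⟨.app t u, e, S⟩ + 1) := by
  have h1 := addr_left_le hmem
  have h2 := addr_right_le hmem hu
  have h3 := sizeE_restrict_le t0 e t.fv
  have h4 := sizeE_restrict_le t0 e u.fv
  simp only [LState.size, State.size, stackSize, List.map, List.sum_cons, List.sum_nil,
    Clo.size] at *
  omega

lemma lfinal_of_skfinal {t0 : Term} {s : State} (hg : GoodState t0 s) (hfin : SKFinal s) :
    LFinal (embed s) := by
  obtain ⟨t, e, S⟩ := s
  intro ls' hstep
  simp only [embed] at hstep
  cases hstep with
  | @sea _ t1 u _ _ =>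
    have hdet : t1.IsDet ∧ u.IsDet ∧ ((∃ x, u = .var x) ∨ ∃ y r, u = .lam y r) := hg.1
    rcases hdet.2.2 with ⟨x, rfl⟩ | ⟨y, r, rfl⟩
    · have hfv : t1.fv ∪ (Term.var x).fv ⊆ e.dom := hg.2.2.1
      have hx : x ∈ Env.dom e := hfv (Finset.mem_union_right _ (by simp [Term.fv]))
      obtain ⟨c, hc⟩ := lookup_of_mem_dom hx
      exact hfin _ (SK.seav S hc)
    · exact hfin _ (SK.seanv S (fun z hz => Term.noConfusion hz))
  | @betaw _ x t1 _ c S1 hx => exact hfin _ (SK.betaw c S1 hx)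
  | @betanw _ x t1 _ c S1 hx => exact hfin _ (SK.betanw c S1 hx)
  | @sub _ x _ u e2 _ hl => exact hfin _ (SK.sub S hl)

lemma lrun_match {t0 : Term} {s : State} {ls' : LState}
    (hg : GoodState t0 s) (h : LRunToEmpty (embed s) ls') :
    ∃ s' : State, ls' = embed s' ∧ SK s s' := by
  obtain ⟨t, e, S⟩ := s
  simp only [embed] at h
  cases h with
  | single hstep hemp =>
    cases hstep with
    | sea => exact absurd hemp (by simp)
    | @betaw _ x t1 _ c S1 hx => exact ⟨⟨t1, e, S1⟩, rfl, SK.betaw c S1 hx⟩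
    | @betanw _ x t1 _ c S1 hx => exact ⟨⟨t1, .cons x c e, S1⟩, rfl, SK.betanw c S1 hx⟩
    | @sub _ x _ u e2 _ hl => exact ⟨⟨u, e2, S⟩, rfl, SK.sub S hl⟩
  | cons hstep hne hrest =>
    cases hstep with
    | betaw hx => exact absurd rfl hne
    | betanw hx => exact absurd rfl hne
    | sub hl => exact absurd rfl hne
    | @sea _ t1 u _ _ =>
      have hdet : t1.IsDet ∧ u.IsDet ∧ ((∃ x, u = .var x) ∨ ∃ y r, u = .lam y r) := hg.1
      rcases hdet.2.2 with ⟨x, rfl⟩ | ⟨y, r, rfl⟩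
      · cases hrest with
        | single hstep2 hemp2 =>
          cases hstep2 with
          | sub hl => exact absurd hemp2 (by simp)
        | cons hstep2 hne2 hrest2 =>
          cases hstep2 with
          | @sub _ _ _ u2 e2 _ hl =>
            have hl' : Env.lookup e x = some (.mk u2 e2) := by
              rw [← lookup_restrict (show x ∈ Term.fv (Term.var x) by simp [Term.fv])]
              exact hl
            obtain ⟨⟨y2, r2, rfl⟩, -, -, -, -⟩ := goodEnv_lookup hg.2.2.2.1 hl'
            cases hrest2 with
            | single hstep3 hemp3 =>
              cases hstep3 with
              | ret =>
                exact ⟨⟨t1, e.restrict t1.fv, .mk (.lam y2 r2) e2 :: S⟩, rfl, SK.seav S hl'⟩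
            | cons hstep3 hne3 _ =>
              cases hstep3 with
              | ret => exact absurd rfl hne3
      · cases hrest with
        | single hstep2 hemp2 =>
          cases hstep2 with
          | ret =>
            exact ⟨⟨t1, e.restrict t1.fv,
              .mk (.lam y r) (e.restrict (Term.lam y r).fv) :: S⟩, rfl,
              SK.seanv S (fun z hz => Term.noConfusion hz)⟩
        | cons hstep2 hne2 _ =>
          cases hstep2 with
          | ret => exact absurd rfl hne2

lemma reach_lam_classify {t0 : Term} (hc : t0.closed) (hd : t0.IsDet) {ls : LState}
    (h : Relation.ReflTransGen LAM (lInit t0) ls) :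
    ∃ s : State, Relation.ReflTransGen SK (initState t0) s ∧
      ls.size t0 ≤ 3 * (s.size t0 + 1) ∧
      (ls = embed s ∨
        (∃ t u, s.tm = Term.app t u ∧
          ls = ⟨[(.mk t (s.env.restrict t.fv), s.stk)], u, s.env.restrict u.fv, []⟩) ∨
        (∃ t e' u' eC S, s = ⟨t, e', .mk u' eC :: S⟩ ∧ (∃ y r, u' = Term.lam y r) ∧
          ls = ⟨[(.mk t e', S)], u', eC, []⟩)) := by
  induction h with
  | refl =>
    refine ⟨initState t0, .refl, ?_, Or.inl rfl⟩
    rw [show lInit t0 = embed (initState t0) from rfl, embed_size]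
    omega
  | tail hab hbc ih =>
    obtain ⟨s, hreach, hsize, hQ⟩ := ih
    have hgs := goodState_reach hc hd hreach
    rcases hQ with rfl | ⟨t, u, htm, rfl⟩ | ⟨t, e', u', eC, S, rfl, ⟨y, r, rfl⟩, rfl⟩
    · -- from an embedded state
      obtain ⟨tm, e, S⟩ := s
      simp only [embed] at hbc
      cases hbc with
      | @sea _ t u _ _ =>
        refine ⟨⟨Term.app t u, e, S⟩, hreach, ?_, Or.inr (Or.inl ⟨t, u, rfl, rfl⟩)⟩
        have hdet : t.IsDet ∧ u.IsDet ∧ ((∃ x, u = .var x) ∨ ∃ y r, u = .lam y r) := hgs.1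
        exact m1_size_bound hgs.2.1 hdet.2.2
      | @betaw _ x t1 _ c S1 hx =>
        refine ⟨⟨t1, e, S1⟩, hreach.tail (SK.betaw c S1 hx), ?_, Or.inl rfl⟩
        rw [size_emptyD]; omega
      | @betanw _ x t1 _ c S1 hx =>
        refine ⟨⟨t1, .cons x c e, S1⟩, hreach.tail (SK.betanw c S1 hx), ?_, Or.inl rfl⟩
        rw [size_emptyD]; omega
      | @sub _ x _ u e2 _ hl =>
        refine ⟨⟨u, e2, S⟩, hreach.tail (SK.sub S hl), ?_, Or.inl rfl⟩
        rw [size_emptyD]; omega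
    · -- mid-state right after `sea`
      have hdet : t.IsDet ∧ u.IsDet ∧ ((∃ x, u = .var x) ∨ ∃ y r, u = .lam y r) := by
        have h1 := hgs.1
        rw [htm] at h1
        exact h1
      rcases hdet.2.2 with ⟨x, rfl⟩ | ⟨y, r, rfl⟩
      · cases hbc with
        | @sub _ _ _ u2 e2 _ hl =>
          have hl' : Env.lookup s.env x = some (.mk u2 e2) := by
            rw [← lookup_restrict (show x ∈ Term.fv (Term.var x) by simp [Term.fv])]
            exact hl
          obtain ⟨⟨y2, r2, hu2⟩, -, -, -, -⟩ := goodEnv_lookup hgs.2.2.2.1 hl'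
          have hstep : SK s ⟨t, s.env.restrict t.fv, .mk u2 e2 :: s.stk⟩ := by
            have hs : s = ⟨Term.app t (Term.var x), s.env, s.stk⟩ := by rw [← htm]
            rw [hs]
            exact SK.seav _ hl'
          refine ⟨_, hreach.tail hstep, ?_,
            Or.inr (Or.inr ⟨t, s.env.restrict t.fv, u2, e2, s.stk, rfl, ⟨y2, r2, hu2⟩, rfl⟩)⟩
          rw [m2_size_eq]
          omega
      · cases hbc with
        | ret =>
          refine ⟨⟨t, s.env.restrict t.fv,
            .mk (Term.lam y r) (s.env.restrict (Term.lam y r).fv) :: s.stk⟩,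
            hreach.tail ?_, ?_, Or.inl rfl⟩
          · have hs : s = ⟨Term.app t (Term.lam y r), s.env, s.stk⟩ := by rw [← htm]
            rw [hs]
            exact SK.seanv _ (fun z hz => Term.noConfusion hz)
          · rw [size_emptyD]; omega
    · -- mid-state just before `ret`
      cases hbc with
      | ret =>
        refine ⟨⟨t, e', .mk (Term.lam y r) eC :: S⟩, hreach, ?_, Or.inl rfl⟩
        rw [size_emptyD]; omega

end BisimAux

/-- the Space KAM and the Space LAM are weakly bisimilar on
`Λdet` (via `R : s ↦ (ε, s)`), the complete runs correspond, and the space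
consumptions agree up to a fixed constant overhead. -/
theorem space_kam_lam_weak_bisimulation :
    ∃ k : ℕ, 0 < k ∧ ∀ t0 : Term, t0.closed → t0.IsDet →
      (∀ s s' : State, Relation.ReflTransGen SK (initState t0) s → SK s s' →
        ∃ j : ℕ, 1 ≤ j ∧ j ≤ 3 ∧ NSteps LAM j (embed s) (embed s')) ∧
      (∀ (s : State) (ls' : LState),
        Relation.ReflTransGen SK (initState t0) s → LRunToEmpty (embed s) ls' →
        ∃ s' : State, ls' = embed s' ∧ (s' = s ∨ SK s s')) ∧
      (∀ s : State, Relation.ReflTransGen SK (initState t0) s → SKFinal s →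
        Relation.ReflTransGen LAM (lInit t0) (embed s) ∧ LFinal (embed s)) ∧
      (∀ ls : LState, Relation.ReflTransGen LAM (lInit t0) ls →
        ∃ s : State, Relation.ReflTransGen SK (initState t0) s ∧
          ls.size t0 ≤ k * (s.size t0 + 1)) ∧
      (∀ s : State, Relation.ReflTransGen SK (initState t0) s →
        ∃ ls : LState, Relation.ReflTransGen LAM (lInit t0) ls ∧
          s.size t0 ≤ k * (ls.size t0 + 1)) := by
  refine ⟨3, by norm_num, fun t0 hc hd => ⟨?_, ?_, ?_, ?_, ?_⟩⟩
  · intro s s' hreach hstep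
    exact sim_step (goodState_reach hc hd hreach) hstep
  · intro s ls' hreach hrun
    obtain ⟨s', h1, h2⟩ := lrun_match (goodState_reach hc hd hreach) hrun
    exact ⟨s', h1, Or.inr h2⟩
  · intro s hreach hfin
    exact ⟨embed_reach hc hd hreach, lfinal_of_skfinal (goodState_reach hc hd hreach) hfin⟩
  · intro ls hreach
    obtain ⟨s, h1, h2, -⟩ := reach_lam_classify hc hd hreach
    exact ⟨s, h1, h2⟩
  · intro s hreach
    refine ⟨embed s, embed_reach hc hd hreach, ?_⟩
    rw [embed_size]
    omega
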